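/- Define integers l_d for d ≥ 1 by the identity of formal power series ∏_{d≥1} (1 − t^d)^{−l_d} = 1/(1 − r t + t^2) over Q. Then l_m = Σ_{c | m} (μ(c)/c) · Σ_{a + 2b = m/c} (−1)^b · binom(a+b, b) · r^a/(a+b), where μ is the Möbius function. -/

import Mathlib

noncomputable section

/-- The coefficient of `t^m` in the formal power series `log(1 − r t + t²)`, defined via
`log(1−u) = −Σ_{j≥1} u^j/j` with `u = r t − t²`; since `u` has positive order, only the
terms with `j ≤ m` contribute to the coefficient of `t^m`. -/
def logCoeff (r : ℚ) (m : ℕ) : ℚ :=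
  -∑ j ∈ Finset.Icc 1 m,
      (1 / (j : ℚ)) *
        PowerSeries.coeff m ((PowerSeries.C r * PowerSeries.X - PowerSeries.X ^ 2) ^ j)

open PowerSeries Finset in
lemma coeff_aux (r : ℚ) (d j : ℕ) :
    PowerSeries.coeff d ((PowerSeries.C r - PowerSeries.X) ^ j)
      = (-1 : ℚ) ^ d * (j.choose d : ℚ) * r ^ (j - d) := by
  rw [sub_eq_add_neg, add_pow, map_sum]
  have hterm : ∀ k, PowerSeries.coeff d
      ((PowerSeries.C r) ^ k * (-PowerSeries.X) ^ (j - k) * ((j.choose k : ℕ) : ℚ⟦X⟧))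
      = if j - k = d then r ^ k * (-1 : ℚ) ^ (j - k) * (j.choose k : ℚ) else 0 := by
    intro k
    have h : ((PowerSeries.C r) ^ k * (-PowerSeries.X) ^ (j - k) * ((j.choose k : ℕ) : ℚ⟦X⟧))
        = PowerSeries.C (r ^ k * (-1 : ℚ) ^ (j - k) * (j.choose k : ℚ)) * PowerSeries.X ^ (j - k) := by
      rw [neg_pow]
      simp only [map_mul, map_pow, map_neg, map_one, map_natCast]
      ring
    rw [h, PowerSeries.coeff_C_mul, PowerSeries.coeff_X_pow, mul_ite, mul_one, mul_zero]
    exact if_congr eq_comm rfl rfl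
  simp only [hterm]
  rcases le_or_gt d j with hd | hd
  · rw [Finset.sum_eq_single (j - d)]
    · rw [if_pos (Nat.sub_sub_self hd), Nat.sub_sub_self hd, Nat.choose_symm hd]
      ring
    · intro k hk hne
      rw [if_neg]
      simp only [Finset.mem_range] at hk
      omega
    · intro h; exact absurd (Finset.mem_range.2 (by omega)) h
  · rw [Finset.sum_eq_zero, Nat.choose_eq_zero_of_lt hd]
    · simp
    · intro k hk
      simp only [Finset.mem_range] at hk
      rw [if_neg (by omega)]

lemma coeff_main (r : ℚ) (n j : ℕ) (hj : j ≤ n) :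
    PowerSeries.coeff n ((PowerSeries.C r * PowerSeries.X - PowerSeries.X ^ 2) ^ j)
      = (-1 : ℚ) ^ (n - j) * (j.choose (n - j) : ℚ) * r ^ (j - (n - j)) := by
  have h : (PowerSeries.C r * PowerSeries.X - PowerSeries.X ^ 2)
      = PowerSeries.X * (PowerSeries.C r - PowerSeries.X) := by ring
  rw [h, mul_pow, PowerSeries.coeff_X_pow_mul', if_pos hj, coeff_aux]

lemma neg_logCoeff_eq (r : ℚ) {n : ℕ} (hn : 1 ≤ n) :
    -logCoeff r n = ∑ b ∈ Finset.range (n / 2 + 1),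
      ((-1 : ℚ) ^ b * ((n - b).choose b : ℚ) * r ^ (n - 2 * b)) / ((n - b : ℕ) : ℚ) := by
  unfold logCoeff
  rw [neg_neg]
  have h1 : (∑ j ∈ Finset.Icc 1 n, (1 / (j : ℚ)) *
      PowerSeries.coeff n ((PowerSeries.C r * PowerSeries.X - PowerSeries.X ^ 2) ^ j))
      = ∑ b ∈ Finset.range n,
        ((-1 : ℚ) ^ b * ((n - b).choose b : ℚ) * r ^ (n - 2 * b)) / ((n - b : ℕ) : ℚ) := by
    apply Finset.sum_nbij' (i := fun j => n - j) (j := fun b => n - b)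
    · intro a ha; simp only [Finset.mem_Icc] at ha; simp only [Finset.mem_range]; omega
    · intro b hb; simp only [Finset.mem_range] at hb; simp only [Finset.mem_Icc]; omega
    · intro a ha; simp only [Finset.mem_Icc] at ha; omega
    · intro b hb; simp only [Finset.mem_range] at hb; omega
    · intro a ha
      simp only [Finset.mem_Icc] at ha
      rw [coeff_main r n a ha.2]
      have e1 : n - (n - a) = a := by omega
      have e2 : a - (n - a) = n - 2 * (n - a) := by omega
      rw [e1, e2, one_div_mul_eq_div]
  rw [h1]
  symm
  apply Finset.sum_subset
  · intro b hb; simp only [Finset.mem_range] at *; omega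
  · intro b hb hb2
    simp only [Finset.mem_range] at hb hb2
    have : (n - b).choose b = 0 := Nat.choose_eq_zero_of_lt (by omega)
    rw [this]
    simp


/-- Let `r` be an integer and let the integers `l_d` be defined by the
formal power series identity `∏_{d≥1} (1 − t^d)^{−l_d} = 1/(1 − r t + t²)`; equivalently,
taking logarithms, the coefficient `λ_m` of `t^m` in `log(1 − r t + t²)` satisfies
`λ_m = −(1/m) Σ_{d ∣ m} d·l_d` for all `m ≥ 1`.  Then
`l_m = Σ_{c ∣ m} (μ(c)/c) Σ_{a+2b=m/c} (−1)^b C(a+b,b) r^a/(a+b)`. -/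
theorem lyndon_dimension_formula (r : ℤ) (l : ℕ → ℤ)
    (hl : ∀ m : ℕ, 1 ≤ m →
      logCoeff (r : ℚ) m = -(1 / (m : ℚ)) * ∑ d ∈ m.divisors, (d : ℚ) * (l d : ℚ)) :
    ∀ m : ℕ, 1 ≤ m →
      (l m : ℚ) =
        ∑ c ∈ m.divisors,
          ((ArithmeticFunction.moebius c : ℚ) / (c : ℚ)) *
            ∑ b ∈ Finset.range (m / c / 2 + 1),
              ((-1 : ℚ) ^ b * (Nat.choose (m / c - b) b : ℚ) * (r : ℚ) ^ (m / c - 2 * b)) /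
                ((m / c - b : ℕ) : ℚ) := by
  
  have hsum : ∀ n : ℕ, n > 0 → ∑ d ∈ n.divisors, ((fun d : ℕ => (d : ℚ) * (l d : ℚ)) d)
      = (fun n : ℕ => -(n : ℚ) * logCoeff (r : ℚ) n) n := by
    intro n hn
    have hn0 : (n : ℚ) ≠ 0 := Nat.cast_ne_zero.mpr hn.ne'
    show ∑ d ∈ n.divisors, ((d : ℚ) * (l d : ℚ)) = -(n : ℚ) * logCoeff (r : ℚ) n
    rw [hl n hn]
    field_simp
  have hinv := ArithmeticFunction.sum_eq_iff_sum_smul_moebius_eq.mp hsum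
  intro m hm
  have hm0 : (m : ℚ) ≠ 0 := Nat.cast_ne_zero.mpr (by omega)
  have h2 := hinv m hm
  rw [Nat.sum_divisorsAntidiagonal
    (f := fun c d : ℕ => (ArithmeticFunction.moebius c) • (-(d : ℚ) * logCoeff (r : ℚ) d))] at h2
  simp only [zsmul_eq_mul] at h2
  have key : (l m : ℚ) = (1 / m) * ((m : ℚ) * (l m : ℚ)) := by field_simp
  rw [key, ← h2, Finset.mul_sum]
  apply Finset.sum_congr rfl
  intro c hc
  obtain ⟨hcd, hmne⟩ := Nat.mem_divisors.mp hc
  have hc0 : c ≠ 0 := by rintro rfl; exact hmne (Nat.eq_zero_of_zero_dvd hcd)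
  have hdiv : 1 ≤ m / c := Nat.one_le_div_iff (Nat.pos_of_ne_zero hc0) |>.mpr (Nat.le_of_dvd (by omega) hcd)
  rw [← neg_logCoeff_eq (r : ℚ) hdiv]
  have hcm : (c : ℚ) * ((m / c : ℕ) : ℚ) = (m : ℚ) := by
    rw [← Nat.cast_mul, Nat.mul_div_cancel' hcd]
  have hc0' : (c : ℚ) ≠ 0 := Nat.cast_ne_zero.mpr hc0
  have hmc' : ((m / c : ℕ) : ℚ) = (m : ℚ) / (c : ℚ) := by
    rw [eq_div_iff hc0', mul_comm]; exact hcm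
  rw [hmc']
  field_simp
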